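/- Let h = v ⊕ z be an H-type Lie algebra, Z₁ ∈ z a unit vector, and v = v₁ ⊕ v₂ an orthogonal decomposition with v₁, v₂ invariant under j_{Z₁}. For r > 0 define a new family of skew-symmetric maps j̃_{Z+λZ₁}(V₁+V₂) = j_{Z+λZ₁}(V₁+V₂) + (r−1) j_{λZ₁}V₂ for Z ⊥ Z₁, λ ∈ ℝ, V_i ∈ v_i. Then every j̃_W for W ∈ z nonzero is invertible, i.e. the resulting 2-step nilpotent Lie algebra n_r is non-singular. -/

import Mathlib

open RealInnerProductSpace

/-- Let `h = v ⊕ z` be an H-type Lie algebra, `Z₁ ∈ z` a unit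
vector, `v = v₁ ⊕ v₂` an orthogonal decomposition into `j_{Z₁}`-invariant
subspaces, and `r > 0`.  The modified maps
`j̃_{Z+λZ₁}(V₁+V₂) = j_{Z+λZ₁}(V₁+V₂) + (r−1) j_{λZ₁} V₂` (for `Z ⊥ Z₁`)
are all invertible on `v` for nonzero central elements; i.e. the modified
2-step nilpotent Lie algebra `n_r` is non-singular. -/
theorem stmt_19 {n : Type*} [NormedAddCommGroup n] [InnerProductSpace ℝ n]
    [FiniteDimensional ℝ n]
    (B : n →ₗ[ℝ] n →ₗ[ℝ] n)
    (hanti : ∀ X Y, B X Y = - B Y X)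
    (h2step : ∀ X Y W, B (B X Y) W = 0)
    (z : Submodule ℝ n) (hz : ∀ X, X ∈ z ↔ ∀ Y, B X Y = 0)
    (j : n → n →ₗ[ℝ] n)
    (hj : ∀ Z ∈ z, ∀ X Y : n, ⟪j Z X, Y⟫ = ⟪Z, B X Y⟫)
    (hH : ∀ Z ∈ z, ∀ V ∈ zᗮ, j Z (j Z V) = - (‖Z‖ ^ 2 • V))
    (Z₁ : n) (hZ₁ : Z₁ ∈ z) (hZ₁norm : ‖Z₁‖ = 1)
    (v₁ v₂ : Submodule ℝ n)
    (hv₁ : v₁ ≤ zᗮ) (hv₂ : v₂ ≤ zᗮ)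
    (horth : ∀ a ∈ v₁, ∀ b ∈ v₂, ⟪a, b⟫ = 0)
    (hsup : v₁ ⊔ v₂ = zᗮ)
    (hinv₁ : ∀ V ∈ v₁, j Z₁ V ∈ v₁) (hinv₂ : ∀ V ∈ v₂, j Z₁ V ∈ v₂)
    (r : ℝ) (hr : 0 < r)
    (jt : n → n →ₗ[ℝ] n)
    (hjt : ∀ Z ∈ z, ⟪Z, Z₁⟫ = 0 → ∀ lam : ℝ, ∀ V₁ ∈ v₁, ∀ V₂ ∈ v₂,
      jt (Z + lam • Z₁) (V₁ + V₂) =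
        j (Z + lam • Z₁) (V₁ + V₂) + (r - 1) • j (lam • Z₁) V₂) :
    ∀ W ∈ z, W ≠ 0 →
      (∀ V ∈ zᗮ, jt W V = 0 → V = 0) ∧ (∀ X ∈ zᗮ, ∃ V ∈ zᗮ, jt W V = X) := by
  -- a vector is zero if it is orthogonal to everything
  have hext : ∀ u : n, (∀ Y, ⟪u, Y⟫ = 0) → u = 0 := by
    intro u h
    have := h u
    rwa [inner_self_eq_zero] at this
  -- j Z maps into zᗮ
  have hmem : ∀ Z ∈ z, ∀ X, j Z X ∈ zᗮ := by
    intro Z hZ X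
    rw [Submodule.mem_orthogonal]
    intro Y hY
    rw [real_inner_comm, hj Z hZ, hanti X Y, (hz Y).mp hY X, neg_zero, inner_zero_right]
  -- skew-symmetry of j Z
  have hskew : ∀ Z ∈ z, ∀ X Y, ⟪j Z X, Y⟫ = -⟪j Z Y, X⟫ := by
    intro Z hZ X Y
    rw [hj Z hZ, hj Z hZ, hanti X Y, inner_neg_right]
  -- additivity of j in the central argument
  have hadd : ∀ Z' ∈ z, ∀ Z'' ∈ z, ∀ X, j (Z' + Z'') X = j Z' X + j Z'' X := by
    intro Z' h' Z'' h'' X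
    rw [← sub_eq_zero]
    apply hext
    intro Y
    rw [inner_sub_left, inner_add_left, hj _ (add_mem h' h''), hj _ h', hj _ h'',
      inner_add_left]
    ring
  -- homogeneity of j in the central argument
  have hsmul : ∀ Z' ∈ z, ∀ (c : ℝ) (X : n), j (c • Z') X = c • j Z' X := by
    intro Z' h' c X
    rw [← sub_eq_zero]
    apply hext
    intro Y
    rw [inner_sub_left, real_inner_smul_left, hj _ (z.smul_mem c h'), hj _ h',
      real_inner_smul_left]
    ring
  -- polarized H-type identity
  have hpol : ∀ Z' ∈ z, ∀ Z'' ∈ z, ∀ V ∈ zᗮ,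
      j Z' (j Z'' V) + j Z'' (j Z' V) = -((2 * ⟪Z', Z''⟫) • V) := by
    intro Z' h' Z'' h'' V hV
    have H1 := hH Z' h' V hV
    have H2 := hH Z'' h'' V hV
    have H3 := hH (Z' + Z'') (add_mem h' h'') V hV
    have e1 : j (Z' + Z'') (j (Z' + Z'') V)
        = j Z' (j Z' V) + j Z' (j Z'' V) + (j Z'' (j Z' V) + j Z'' (j Z'' V)) := by
      rw [hadd Z' h' Z'' h'' V, hadd Z' h' Z'' h'' (j Z' V + j Z'' V), map_add, map_add]
    rw [e1, H1, H2, norm_add_sq_real] at H3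
    have e2 : j Z' (j Z'' V) + j Z'' (j Z' V)
        = -((‖Z'‖ ^ 2 + 2 * ⟪Z', Z''⟫ + ‖Z''‖ ^ 2) • V) + ‖Z'‖ ^ 2 • V + ‖Z''‖ ^ 2 • V := by
      rw [← H3]; abel
    rw [e2]
    module
  -- key inner product identity
  have hkey : ∀ Z' ∈ z, ∀ Z'' ∈ z, ∀ V ∈ zᗮ, ∀ V' : n,
      ⟪j Z' V, j Z'' V'⟫ + ⟪j Z'' V, j Z' V'⟫ = 2 * ⟪Z', Z''⟫ * ⟪V, V'⟫ := by
    intro Z' h' Z'' h'' V hV V'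
    have e1 : ⟪j Z' V, j Z'' V'⟫ = -⟪j Z'' (j Z' V), V'⟫ := by
      rw [hskew Z'' h'' (j Z' V) V', neg_neg]
      exact real_inner_comm _ _
    have e2 : ⟪j Z'' V, j Z' V'⟫ = -⟪j Z' (j Z'' V), V'⟫ := by
      rw [hskew Z' h' (j Z'' V) V', neg_neg]
      exact real_inner_comm _ _
    rw [e1, e2, ← neg_add, ← inner_add_left, add_comm, hpol Z' h' Z'' h'' V hV,
      inner_neg_left, real_inner_smul_left, neg_neg]
  intro W hW hWne
  set lam : ℝ := ⟪W, Z₁⟫ with hlamdef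
  have hZ₁inner : ⟪Z₁, Z₁⟫ = (1 : ℝ) := by
    rw [real_inner_self_eq_norm_sq, hZ₁norm]; norm_num
  have hZz : W - lam • Z₁ ∈ z := sub_mem hW (z.smul_mem lam hZ₁)
  have hZperp : ⟪W - lam • Z₁, Z₁⟫ = 0 := by
    rw [inner_sub_left, real_inner_smul_left, hZ₁inner]
    ring
  have hWdec : W - lam • Z₁ + lam • Z₁ = W := sub_add_cancel W (lam • Z₁)
  -- the formula for jt W on decomposed vectors
  have hform : ∀ V ∈ zᗮ, ∃ V₁ ∈ v₁, ∃ V₂ ∈ v₂, V₁ + V₂ = V ∧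
      jt W V = j W V + (r - 1) • (lam • j Z₁ V₂) := by
    intro V hV
    have hV' : V ∈ v₁ ⊔ v₂ := by rw [hsup]; exact hV
    obtain ⟨V₁, h1, V₂, h2, hVeq⟩ := Submodule.mem_sup.mp hV'
    refine ⟨V₁, h1, V₂, h2, hVeq, ?_⟩
    have heq := hjt (W - lam • Z₁) hZz hZperp lam V₁ h1 V₂ h2
    rw [hWdec, hVeq, hsmul Z₁ hZ₁ lam V₂] at heq
    exact heq
  -- injectivity
  have hinj : ∀ V ∈ zᗮ, jt W V = 0 → V = 0 := by
    intro V hV h0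
    obtain ⟨V₁, h1, V₂, h2, hVeq, heq⟩ := hform V hV
    by_cases hlam : lam = 0
    · -- jt W V = j W V
      have hjW0 : j W V = 0 := by
        rw [h0, hlam, zero_smul, smul_zero, add_zero] at heq
        exact heq.symm
      have := hH W hW V hV
      rw [hjW0, map_zero] at this
      have : ‖W‖ ^ 2 • V = 0 := by
        rw [← neg_eq_zero, ← this]
      rcases smul_eq_zero.mp this with h | h
      · exact absurd (by
          have := pow_eq_zero_iff (n := 2) (by norm_num) |>.mp h
          exact norm_eq_zero.mp this) hWne
      · exact h
    · -- pair with j Z₁ V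
      have hjWV : j W V = j (W - lam • Z₁) V + lam • j Z₁ V := by
        conv_lhs => rw [← hWdec]
        rw [hadd _ hZz _ (z.smul_mem lam hZ₁), hsmul Z₁ hZ₁ lam]
      have c1 : ⟪j (W - lam • Z₁) V, j Z₁ V⟫ = 0 := by
        have h := hkey _ hZz _ hZ₁ V hV V
        rw [hZperp] at h
        have hz0 : (2 : ℝ) * 0 * ⟪V, V⟫ = 0 := by ring
        rw [hz0] at h
        have hc := real_inner_comm (j (W - lam • Z₁) V) (j Z₁ V)
        linarith
      have ho : ⟪V₁, V₂⟫ = 0 := horth V₁ h1 V₂ h2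
      have ho' : ⟪V₂, V₁⟫ = 0 := by rw [real_inner_comm]; exact ho
      have hVV : ⟪V, V⟫ = ‖V₁‖ ^ 2 + ‖V₂‖ ^ 2 := by
        rw [← hVeq]
        simp [inner_add_left, inner_add_right, ho, ho', real_inner_self_eq_norm_sq, norm_add_sq_real]
      have c2 : ⟪j Z₁ V, j Z₁ V⟫ = ‖V₁‖ ^ 2 + ‖V₂‖ ^ 2 := by
        have := hkey _ hZ₁ _ hZ₁ V hV V
        rw [hZ₁inner, hVV] at this
        linarith
      have hV2V : ⟪V₂, V⟫ = ‖V₂‖ ^ 2 := by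
        rw [← hVeq]
        simp [inner_add_right, ho', real_inner_self_eq_norm_sq]
      have c3 : ⟪j Z₁ V₂, j Z₁ V⟫ = ‖V₂‖ ^ 2 := by
        have := hkey _ hZ₁ _ hZ₁ V₂ (hv₂ h2) V
        rw [hZ₁inner, hV2V] at this
        linarith
      have hmain : (0 : ℝ) = lam * (‖V₁‖ ^ 2 + r * ‖V₂‖ ^ 2) := by
        have : ⟪jt W V, j Z₁ V⟫ = lam * (‖V₁‖ ^ 2 + r * ‖V₂‖ ^ 2) := by
          rw [heq, hjWV, inner_add_left, inner_add_left, real_inner_smul_left,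
            real_inner_smul_left, real_inner_smul_left, c1, c2, c3]
          ring
        rw [h0, inner_zero_left] at this
        exact this
      have hsum : ‖V₁‖ ^ 2 + r * ‖V₂‖ ^ 2 = 0 := by
        rcases mul_eq_zero.mp hmain.symm with h | h
        · exact absurd h hlam
        · exact h
      have hV1 : V₁ = 0 := by
        have : ‖V₁‖ ^ 2 = 0 := by nlinarith [sq_nonneg ‖V₁‖, sq_nonneg ‖V₂‖]
        exact norm_eq_zero.mp (pow_eq_zero_iff (n := 2) (by norm_num) |>.mp this)
      have hV2 : V₂ = 0 := by
        have : ‖V₂‖ ^ 2 = 0 := by nlinarith [sq_nonneg ‖V₁‖, sq_nonneg ‖V₂‖]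
        exact norm_eq_zero.mp (pow_eq_zero_iff (n := 2) (by norm_num) |>.mp this)
      rw [← hVeq, hV1, hV2, add_zero]
  refine ⟨hinj, ?_⟩
  -- surjectivity
  have hmaps : ∀ V ∈ zᗮ, jt W V ∈ zᗮ := by
    intro V hV
    obtain ⟨V₁, h1, V₂, h2, hVeq, heq⟩ := hform V hV
    rw [heq]
    exact add_mem (hmem W hW V) (Submodule.smul_mem _ _ (Submodule.smul_mem _ _ (hmem Z₁ hZ₁ V₂)))
  intro X hX
  let f : zᗮ →ₗ[ℝ] zᗮ := (jt W).restrict hmaps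
  have hfinj : Function.Injective f := by
    rw [← LinearMap.ker_eq_bot, LinearMap.ker_eq_bot']
    intro u hu
    have : jt W u.1 = 0 := congrArg Subtype.val hu
    exact Subtype.ext (hinj u.1 u.2 this)
  have hfsurj : Function.Surjective f := (LinearMap.injective_iff_surjective).mp hfinj
  obtain ⟨u, hu⟩ := hfsurj ⟨X, hX⟩
  exact ⟨u.1, u.2, congrArg Subtype.val hu⟩
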